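/- Fix t = (t_2, …, t_L) with each t_ℓ ∈ [0,1]^{r_{ℓ−1}}, fix x ∈ ℝ^M, a ∈ ℝ, m ∈ {1,…,M}, and fix s_{ℓ+1}, …, s_L (each s_j ∈ [0,1]^{r_{j−1}}). Then for every ℓ with 2 ≤ ℓ ≤ L−1: sup_{s_ℓ ∈ [0,1]^{r_{ℓ−1}}} ( p_ℓ(s,t)ᵀ g^{ℓ−1}_m(x, t, a, 1) + q_ℓ(s,t)ᵀ g^{ℓ−1}_m(x, t, a, −1) ) = p_{ℓ+1}(s,t)ᵀ g^ℓ_m(x, t, a, 1) + q_{ℓ+1}(s,t)ᵀ g^ℓ_m(x, t, a, −1) − ( p_{ℓ+1}(s,t) − q_{ℓ+1}(s,t) )ᵀ b^ℓ. -/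

import Mathlib

/-- `c_k := e_k - e_y` as a vector on `ℕ` (only the first `K` coordinates are used). -/
def cVecN (y k : ℕ) : ℕ → ℝ :=
  fun i => (if i = k then 1 else 0) - (if i = y then 1 else 0)

/-- The `L`-layer ReLU network: `netZ r W b ℓ x = z^ℓ(x)`, where `z¹(x) = W¹ x + b¹` and
`z^ℓ(x) = W^ℓ [z^{ℓ-1}(x)]⁺ + b^ℓ`.  Vectors in `ℝ^{r_ℓ}` are modelled as functions `ℕ → ℝ`
whose first `r ℓ` coordinates are meaningful; `W ℓ : ℝ^{r_ℓ × r_{ℓ-1}}` as `ℕ → ℕ → ℝ`. -/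
noncomputable def netZ (r : ℕ → ℕ) (W : ℕ → ℕ → ℕ → ℝ) (b : ℕ → ℕ → ℝ) :
    ℕ → (ℕ → ℝ) → ℕ → ℝ
  | 0 => fun x => x
  | 1 => fun x i => (∑ j ∈ Finset.range (r 0), W 1 i j * x j) + b 1 i
  | (ℓ + 2) => fun x i =>
      (∑ j ∈ Finset.range (r (ℓ + 1)),
          W (ℓ + 2) i j * max (netZ r W b (ℓ + 1) x j) 0) + b (ℓ + 2) i

/-- The dual variables `(p_ℓ, q_ℓ)` of the robust reformulation, indexed by depth `d` from the
top layer, so `dualPQ r W L c s t d = (p_{L-d}, q_{L-d})`: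
`p_L = [(W^L)ᵀ c]⁺ ⊙ s_L`, `q_L = [-(W^L)ᵀ c]⁺ ⊙ t_L`, and for `ℓ = L - d - 1`,
`p_ℓ = (([W^ℓ]⁺)ᵀ p_{ℓ+1} + ([-W^ℓ]⁺)ᵀ q_{ℓ+1}) ⊙ s_ℓ`,
`q_ℓ = (([-W^ℓ]⁺)ᵀ p_{ℓ+1} + ([W^ℓ]⁺)ᵀ q_{ℓ+1}) ⊙ t_ℓ`. -/
noncomputable def dualPQ (r : ℕ → ℕ) (W : ℕ → ℕ → ℕ → ℝ) (L : ℕ) (c : ℕ → ℝ)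
    (s t : ℕ → ℕ → ℝ) : ℕ → (ℕ → ℝ) × (ℕ → ℝ)
  | 0 =>
      (fun j => max (∑ i ∈ Finset.range (r L), W L i j * c i) 0 * s L j,
       fun j => max (-(∑ i ∈ Finset.range (r L), W L i j * c i)) 0 * t L j)
  | (d + 1) =>
      let pq := dualPQ r W L c s t d
      (fun j =>
          ((∑ i ∈ Finset.range (r (L - d - 1)), max (W (L - d - 1) i j) 0 * pq.1 i)
            + ∑ i ∈ Finset.range (r (L - d - 1)), max (-(W (L - d - 1) i j)) 0 * pq.2 i)
            * s (L - d - 1) j,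
       fun j =>
          ((∑ i ∈ Finset.range (r (L - d - 1)), max (-(W (L - d - 1) i j)) 0 * pq.1 i)
            + ∑ i ∈ Finset.range (r (L - d - 1)), max (W (L - d - 1) i j) 0 * pq.2 i)
            * t (L - d - 1) j)

/-- Nested alternating `sup`/`inf` over the levels in the given list: for each level `ℓ` in
order, take `sup` over `s_ℓ ∈ [0,1]^∞` then `inf` over `t_ℓ ∈ [0,1]^∞`, finally evaluating
`F` at the updated families `s, t`. -/
noncomputable def nestSupInf (F : (ℕ → ℕ → ℝ) → (ℕ → ℕ → ℝ) → EReal) :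
    List ℕ → (ℕ → ℕ → ℝ) → (ℕ → ℕ → ℝ) → EReal
  | [], s, t => F s t
  | ℓ :: rest, s, t =>
      ⨆ sl ∈ Set.Icc (0 : ℕ → ℝ) 1, ⨅ tl ∈ Set.Icc (0 : ℕ → ℝ) 1,
        nestSupInf F rest (Function.update s ℓ sl) (Function.update t ℓ tl)

/-- The auxiliary network `g^ℓ_m(x, t, a, rs)`:
`g¹_m = rs (a W¹ e_m + W¹ x + b¹)`, and for `1 < ℓ`,
`g^ℓ_m(·, rs) = [rs W^ℓ]⁺ [g^{ℓ-1}_m(·, 1)]⁺ + [-rs W^ℓ]⁺ (g^{ℓ-1}_m(·, -1) ⊙ t_ℓ) + rs b^ℓ`. -/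
noncomputable def gAux (r : ℕ → ℕ) (W : ℕ → ℕ → ℕ → ℝ) (b : ℕ → ℕ → ℝ)
    (x : ℕ → ℝ) (t : ℕ → ℕ → ℝ) (a : ℝ) (m : ℕ) : ℕ → ℝ → ℕ → ℝ
  | 0 => fun _ _ => 0
  | 1 => fun rs i => rs * (a * W 1 i m + ((∑ j ∈ Finset.range (r 0), W 1 i j * x j) + b 1 i))
  | (ℓ + 2) => fun rs i =>
      (∑ j ∈ Finset.range (r (ℓ + 1)),
          max (rs * W (ℓ + 2) i j) 0 * max (gAux r W b x t a m (ℓ + 1) 1 j) 0)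
        + (∑ j ∈ Finset.range (r (ℓ + 1)),
          max (-(rs * W (ℓ + 2) i j)) 0 * (gAux r W b x t a m (ℓ + 1) (-1) j * t (ℓ + 2) j))
        + rs * b (ℓ + 2) i


lemma dualPQ_update (r : ℕ → ℕ) (W : ℕ → ℕ → ℕ → ℝ) (L : ℕ) (c : ℕ → ℝ)
    (s t : ℕ → ℕ → ℝ) (ℓ0 : ℕ) (sl : ℕ → ℝ) :
    ∀ d, ℓ0 + d < L →
      dualPQ r W L c (Function.update s ℓ0 sl) t d = dualPQ r W L c s t d := by
  intro d
  induction d with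
  | zero =>
      intro h
      simp [dualPQ, Function.update_of_ne (show L ≠ ℓ0 by omega)]
  | succ d ih =>
      intro h
      simp only [dualPQ, ih (by omega),
        Function.update_of_ne (show L - d - 1 ≠ ℓ0 by omega)]

lemma dualPQ_nonneg (r : ℕ → ℕ) (W : ℕ → ℕ → ℕ → ℝ) (L : ℕ) (c : ℕ → ℝ)
    (s t : ℕ → ℕ → ℝ) :
    ∀ d, (∀ j, L - d ≤ j → j ≤ L → ∀ i, 0 ≤ s j i) →
      (∀ j, L - d ≤ j → j ≤ L → ∀ i, 0 ≤ t j i) →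
      ∀ i, 0 ≤ (dualPQ r W L c s t d).1 i ∧ 0 ≤ (dualPQ r W L c s t d).2 i := by
  intro d
  induction d with
  | zero =>
      intro hs ht i
      constructor <;>
        exact mul_nonneg (le_max_right _ _) (by first
          | exact hs L (by omega) le_rfl i
          | exact ht L (by omega) le_rfl i)
  | succ d ih =>
      intro hs ht i
      have hP := fun i => (ih (fun j h1 h2 => hs j (by omega) h2)
        (fun j h1 h2 => ht j (by omega) h2) i).1
      have hQ := fun i => (ih (fun j h1 h2 => hs j (by omega) h2)
        (fun j h1 h2 => ht j (by omega) h2) i).2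
      constructor
      · exact mul_nonneg (add_nonneg
          (Finset.sum_nonneg fun _ _ => mul_nonneg (le_max_right _ _) (hP _))
          (Finset.sum_nonneg fun _ _ => mul_nonneg (le_max_right _ _) (hQ _)))
          (hs (L - d - 1) (by omega) (by omega) i)
      · exact mul_nonneg (add_nonneg
          (Finset.sum_nonneg fun _ _ => mul_nonneg (le_max_right _ _) (hP _))
          (Finset.sum_nonneg fun _ _ => mul_nonneg (le_max_right _ _) (hQ _)))
          (ht (L - d - 1) (by omega) (by omega) i)

lemma sup_icc (n : ℕ) (c g : ℕ → ℝ) (hc : ∀ j, 0 ≤ c j) (K : ℝ) :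
    (⨆ sl ∈ Set.Icc (0 : ℕ → ℝ) 1,
        ((∑ j ∈ Finset.range n, c j * sl j * g j + K : ℝ) : EReal)) =
      ((∑ j ∈ Finset.range n, c j * max (g j) 0 + K : ℝ) : EReal) := by
  apply le_antisymm
  · refine iSup₂_le fun sl hsl => ?_
    rw [EReal.coe_le_coe_iff]
    refine add_le_add (Finset.sum_le_sum fun j _ => ?_) (le_refl K)
    rw [mul_assoc]
    refine mul_le_mul_of_nonneg_left ?_ (hc j)
    rcases le_or_gt 0 (g j) with h | h
    · calc sl j * g j ≤ 1 * g j := mul_le_mul_of_nonneg_right (hsl.2 j) h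
        _ ≤ max (g j) 0 := by simp [le_max_left]
    · calc sl j * g j ≤ 0 := mul_nonpos_of_nonneg_of_nonpos (hsl.1 j) h.le
        _ ≤ max (g j) 0 := le_max_right _ _
  · have hmem : (fun j => if 0 ≤ g j then (1 : ℝ) else 0) ∈ Set.Icc (0 : ℕ → ℝ) 1 := by
      constructor <;> intro j <;> dsimp <;> split <;> norm_num
    have h := le_iSup₂ (f := fun sl (_ : sl ∈ Set.Icc (0 : ℕ → ℝ) 1) =>
      ((∑ j ∈ Finset.range n, c j * sl j * g j + K : ℝ) : EReal))
      (fun j => if 0 ≤ g j then (1 : ℝ) else 0) hmem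
    refine le_trans (le_of_eq ?_) h
    norm_cast
    refine congrArg (· + K) (Finset.sum_congr rfl fun j _ => ?_)
    by_cases h : 0 ≤ g j
    · simp [h, max_eq_left h]
    · simp [h, max_eq_right (le_of_not_ge h)]

open Finset in
lemma key_alg (n1 n2 : ℕ) (P Q : ℕ → ℝ) (Wl : ℕ → ℕ → ℝ) (G1 Gm T Bv : ℕ → ℝ) :
    ∑ j ∈ range n1, (∑ i ∈ range n2, (Wl i j ⊔ 0) * P i
        + ∑ i ∈ range n2, (-Wl i j ⊔ 0) * Q i) * (G1 j ⊔ 0)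
      + ∑ j ∈ range n1, (∑ i ∈ range n2, (-Wl i j ⊔ 0) * P i
        + ∑ i ∈ range n2, (Wl i j ⊔ 0) * Q i) * T j * Gm j
    = ∑ i ∈ range n2, P i * (∑ j ∈ range n1, (Wl i j ⊔ 0) * (G1 j ⊔ 0)
          + ∑ j ∈ range n1, (-Wl i j ⊔ 0) * (Gm j * T j) + Bv i)
      + ∑ i ∈ range n2, Q i * (∑ j ∈ range n1, (-Wl i j ⊔ 0) * (G1 j ⊔ 0)
          + ∑ j ∈ range n1, (Wl i j ⊔ 0) * (Gm j * T j) + -Bv i)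
      - ∑ i ∈ range n2, (P i - Q i) * Bv i := by
  have hc : ∀ (f g : ℕ → ℕ → ℝ), (∀ i j, f i j = g i j) →
      (∑ i ∈ range n2, ∑ j ∈ range n1, f i j) = ∑ i ∈ range n2, ∑ j ∈ range n1, g i j :=
    fun f g h => sum_congr rfl fun i _ => sum_congr rfl fun j _ => h i j
  simp only [add_mul, sum_mul, mul_add, Finset.mul_sum, sum_add_distrib, sub_mul,
    sum_sub_distrib, mul_neg]
  rw [Finset.sum_comm (s := range n1) (t := range n2)
      (f := fun j i => (Wl i j ⊔ 0) * P i * (G1 j ⊔ 0)),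
    Finset.sum_comm (s := range n1) (t := range n2)
      (f := fun j i => (-Wl i j ⊔ 0) * Q i * (G1 j ⊔ 0)),
    Finset.sum_comm (s := range n1) (t := range n2)
      (f := fun j i => (-Wl i j ⊔ 0) * P i * T j * Gm j),
    Finset.sum_comm (s := range n1) (t := range n2)
      (f := fun j i => (Wl i j ⊔ 0) * Q i * T j * Gm j)]
  rw [hc (fun i j => (Wl i j ⊔ 0) * P i * (G1 j ⊔ 0))
      (fun i j => P i * (Wl i j ⊔ 0) * (G1 j ⊔ 0)) (fun i j => by ring),
    hc (fun i j => (-Wl i j ⊔ 0) * Q i * (G1 j ⊔ 0))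
      (fun i j => Q i * (-Wl i j ⊔ 0) * (G1 j ⊔ 0)) (fun i j => by ring),
    hc (fun i j => (-Wl i j ⊔ 0) * P i * T j * Gm j)
      (fun i j => P i * (-Wl i j ⊔ 0) * Gm j * T j) (fun i j => by ring),
    hc (fun i j => (Wl i j ⊔ 0) * Q i * T j * Gm j)
      (fun i j => Q i * (Wl i j ⊔ 0) * Gm j * T j) (fun i j => by ring)]
  rw [Finset.sum_neg_distrib]
  ring
/-- Lemma 8: solving the supremum over `s_ℓ ∈ [0,1]^{r_{ℓ-1}}` of
`p_ℓ(s,t)ᵀ g^{ℓ-1}_m(x,t,a,1) + q_ℓ(s,t)ᵀ g^{ℓ-1}_m(x,t,a,-1)` yields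
`p_{ℓ+1}(s,t)ᵀ g^ℓ_m(x,t,a,1) + q_{ℓ+1}(s,t)ᵀ g^ℓ_m(x,t,a,-1) - (p_{ℓ+1} - q_{ℓ+1})ᵀ b^ℓ`,
for every `2 ≤ ℓ ≤ L - 1`.  Here `p_ℓ = (dualPQ … (L - ℓ)).1`, etc. -/
theorem statement10 (r : ℕ → ℕ) (L : ℕ) (hL : 2 ≤ L)
    (W : ℕ → ℕ → ℕ → ℝ) (b : ℕ → ℕ → ℝ)
    (y k : ℕ) (hy : y < r L) (hk : k < r L)
    (x : ℕ → ℝ) (a : ℝ) (m : ℕ) (hm : m < r 0)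
    (s t : ℕ → ℕ → ℝ) (ℓ : ℕ) (hℓ2 : 2 ≤ ℓ) (hℓL : ℓ ≤ L - 1)
    (hs : ∀ j, ℓ + 1 ≤ j → j ≤ L → s j ∈ Set.Icc (0 : ℕ → ℝ) 1)
    (ht : ∀ j, 2 ≤ j → j ≤ L → t j ∈ Set.Icc (0 : ℕ → ℝ) 1) :
    (⨆ sl ∈ Set.Icc (0 : ℕ → ℝ) 1,
        ((∑ j ∈ Finset.range (r (ℓ - 1)),
            (dualPQ r W L (cVecN y k) (Function.update s ℓ sl) t (L - ℓ)).1 j *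
              gAux r W b x t a m (ℓ - 1) 1 j
          + ∑ j ∈ Finset.range (r (ℓ - 1)),
            (dualPQ r W L (cVecN y k) (Function.update s ℓ sl) t (L - ℓ)).2 j *
              gAux r W b x t a m (ℓ - 1) (-1) j : ℝ) : EReal)) =
      ((∑ j ∈ Finset.range (r ℓ),
          (dualPQ r W L (cVecN y k) s t (L - ℓ - 1)).1 j * gAux r W b x t a m ℓ 1 j
        + ∑ j ∈ Finset.range (r ℓ),
          (dualPQ r W L (cVecN y k) s t (L - ℓ - 1)).2 j * gAux r W b x t a m ℓ (-1) j
        - ∑ j ∈ Finset.range (r ℓ),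
          ((dualPQ r W L (cVecN y k) s t (L - ℓ - 1)).1 j
              - (dualPQ r W L (cVecN y k) s t (L - ℓ - 1)).2 j) * b ℓ j : ℝ) : EReal) := by
  obtain ⟨e, rfl⟩ : ∃ e, ℓ = e + 2 := ⟨ℓ - 2, by omega⟩
  obtain ⟨d, rfl⟩ : ∃ d, L = e + d + 3 := ⟨L - e - 3, by omega⟩
  have h1 : e + d + 3 - (e + 2) = d + 1 := by omega
  have h2 : e + d + 3 - (e + 2) - 1 = d := by omega
  have h3 : e + d + 3 - d - 1 = e + 2 := by omega
  have h4 : e + 2 - 1 = e + 1 := by omega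
  have hupd : ∀ sl, dualPQ r W (e + d + 3) (cVecN y k) (Function.update s (e + 2) sl) t d
      = dualPQ r W (e + d + 3) (cVecN y k) s t d :=
    fun sl => dualPQ_update r W _ _ s t _ sl d (by omega)
  have hPQ := dualPQ_nonneg r W (e + d + 3) (cVecN y k) s t d
    (fun j hj1 hj2 i => (hs j (by omega) hj2).1 i)
    (fun j hj1 hj2 i => (ht j (by omega) hj2).1 i)
  simp only [h1, h2, h4, dualPQ, h3, hupd, Function.update_self, gAux, one_mul,
    neg_one_mul, neg_neg, Nat.add_sub_cancel]
  refine (sup_icc (r (e + 1))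
      (fun j => ∑ i ∈ Finset.range (r (e + 2)),
          (W (e + 2) i j ⊔ 0) * (dualPQ r W (e + d + 3) (cVecN y k) s t d).1 i
        + ∑ i ∈ Finset.range (r (e + 2)),
          (-W (e + 2) i j ⊔ 0) * (dualPQ r W (e + d + 3) (cVecN y k) s t d).2 i)
      (gAux r W b x t a m (e + 1) 1)
      (fun j => add_nonneg
        (Finset.sum_nonneg fun i _ => mul_nonneg (le_max_right _ _) (hPQ i).1)
        (Finset.sum_nonneg fun i _ => mul_nonneg (le_max_right _ _) (hPQ i).2))
      (∑ j ∈ Finset.range (r (e + 1)),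
        (∑ i ∈ Finset.range (r (e + 2)),
            (-W (e + 2) i j ⊔ 0) * (dualPQ r W (e + d + 3) (cVecN y k) s t d).1 i
          + ∑ i ∈ Finset.range (r (e + 2)),
            (W (e + 2) i j ⊔ 0) * (dualPQ r W (e + d + 3) (cVecN y k) s t d).2 i)
          * t (e + 2) j * gAux r W b x t a m (e + 1) (-1) j)).trans ?_
  rw [EReal.coe_eq_coe_iff]
  exact key_alg (r (e + 1)) (r (e + 2))
    (dualPQ r W (e + d + 3) (cVecN y k) s t d).1
    (dualPQ r W (e + d + 3) (cVecN y k) s t d).2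
    (fun i j => W (e + 2) i j)
    (gAux r W b x t a m (e + 1) 1) (gAux r W b x t a m (e + 1) (-1))
    (t (e + 2)) (fun i => b (e + 2) i)
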